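/- For all nonnegative integers n: Σ_{k=0}^{n} Σ_{ℓ=0}^{n-k} (-1)^{n+k+ℓ} C(k,i) C(ℓ,j) · [(ℓ+1)/(k+ℓ+1)] C(n,k+ℓ) C(n+k,n) = [(j+1)/(i+j+1)] C(n,i+j) C(n+i,n), for all 0 ≤ i, j with i+j ≤ n. -/

import Mathlib

open Finset


/-- Finite difference identity: `∑_{u≤m} (-1)^u C(m,u) C(s+u,r) = (-1)^m C(s,r-m)` for `m ≤ r`. -/
lemma ds_key (r : ℕ) : ∀ m, m ≤ r → ∀ s : ℕ,
    ∑ u ∈ range (m+1), (-1:ℚ)^u * (Nat.choose m u) * (Nat.choose (s+u) r)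
      = (-1)^m * (Nat.choose s (r-m)) := by
  intro m
  induction m with
  | zero => intro _ s; simp
  | succ m ih =>
    intro hm s
    have hm' : m ≤ r := by omega
    rw [Finset.sum_range_succ']
    have h1 : ∀ u : ℕ, (-1:ℚ)^(u+1) * (Nat.choose (m+1) (u+1)) * (Nat.choose (s+(u+1)) r)
        = -((-1:ℚ)^u * (Nat.choose m u) * (Nat.choose (s+1+u) r))
          - ((-1:ℚ)^u * (Nat.choose m (u+1)) * (Nat.choose (s+1+u) r)) := by
      intro u
      have e1 : s + (u+1) = s+1+u := by omega
      rw [e1, Nat.choose_succ_succ']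
      push_cast
      ring
    rw [Finset.sum_congr rfl (fun u _ => h1 u), Finset.sum_sub_distrib, Finset.sum_neg_distrib]
    have hA := ih hm' (s+1)
    have hB : ∑ u ∈ range (m+1), (-1:ℚ)^u * (Nat.choose m (u+1)) * (Nat.choose (s+1+u) r)
        = (Nat.choose s r : ℚ) - (-1)^m * (Nat.choose s (r-m)) := by
      have hthis := ih hm' s
      rw [Finset.sum_range_succ'] at hthis
      rw [Finset.sum_range_succ]
      have hz : (Nat.choose m (m+1) : ℚ) = 0 := by
        rw [Nat.choose_succ_self]; norm_num
      have h2 : ∀ u : ℕ, (-1:ℚ)^u * (Nat.choose m (u+1)) * (Nat.choose (s+1+u) r)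
          = -((-1:ℚ)^(u+1) * (Nat.choose m (u+1)) * (Nat.choose (s+(u+1)) r)) := by
        intro u
        have e1 : s + (u+1) = s+1+u := by omega
        rw [e1]; push_cast; ring
      rw [Finset.sum_congr rfl (fun u _ => h2 u), Finset.sum_neg_distrib]
      simp only [hz, pow_zero, Nat.choose_zero_right, Nat.cast_one, add_zero, mul_zero, zero_mul] at hthis ⊢
      linarith [hthis]
    rw [hA, hB]
    have hp : (Nat.choose (s+1) (r-m) : ℚ) = (Nat.choose s (r-m-1) : ℚ) + (Nat.choose s (r-m) : ℚ) := by
      have e2 : r - m = (r-m-1)+1 := by omega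
      rw [e2, Nat.choose_succ_succ']
      push_cast
      ring
    have e3 : r - (m+1) = r - m - 1 := by omega
    rw [e3]
    simp only [pow_zero, Nat.choose_zero_right, Nat.cast_one, add_zero]
    rw [hp]
    push_cast
    ring


/-- `∑_{u≤w} (-1)^u C(r+u,u) C(b,w-u) = C(b-r-1,w)` for `r < b`. -/
lemma ds_conv (b : ℕ) : ∀ r, r < b → ∀ w : ℕ,
    ∑ u ∈ range (w+1), (-1:ℚ)^u * (Nat.choose (r+u) u) * (Nat.choose b (w-u))
      = (Nat.choose (b-r-1) w : ℚ) := by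
  intro r
  induction r with
  | zero =>
    intro hb w
    induction w with
    | zero => simp
    | succ w ihw =>
      rw [Finset.sum_range_succ']
      have h1 : ∀ u : ℕ, (-1:ℚ)^(u+1) * (Nat.choose (0+(u+1)) (u+1)) * (Nat.choose b (w+1-(u+1)))
          = -((-1:ℚ)^u * (Nat.choose (0+u) u) * (Nat.choose b (w-u))) := by
        intro u
        have e1 : w+1-(u+1) = w-u := by omega
        rw [e1]
        simp [Nat.choose_self]
        ring
      rw [Finset.sum_congr rfl (fun u _ => h1 u), Finset.sum_neg_distrib, ihw]
      have hp : (Nat.choose b (w+1) : ℚ) = (Nat.choose (b-1) w : ℚ) + (Nat.choose (b-1) (w+1) : ℚ) := by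
        have e2 : b = (b-1)+1 := by omega
        rw [e2, Nat.choose_succ_succ']
        push_cast
        ring
      have e3 : b - 0 - 1 = b - 1 := by omega
      simp only [e3, Nat.sub_zero, pow_zero, Nat.choose_zero_right, Nat.choose_self,
        Nat.cast_one, one_mul, Nat.sub_self]
      rw [hp]
      push_cast
      ring
  | succ r ihr =>
    intro hb
    have hr : r < b := by omega
    intro w
    induction w with
    | zero => simp
    | succ w ihw =>
      rw [Finset.sum_range_succ']
      have h1 : ∀ u : ℕ, (-1:ℚ)^(u+1) * (Nat.choose (r+1+(u+1)) (u+1)) * (Nat.choose b (w+1-(u+1)))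
          = -((-1:ℚ)^u * (Nat.choose (r+1+u) u) * (Nat.choose b (w-u)))
            - ((-1:ℚ)^u * (Nat.choose (r+(u+1)) (u+1)) * (Nat.choose b (w-u))) := by
        intro u
        have e1 : w+1-(u+1) = w-u := by omega
        have e2 : r+1+(u+1) = (r+1+u)+1 := by omega
        rw [e1, e2, Nat.choose_succ_succ']
        have e4 : r + 1 + u = r + (u+1) := by omega
        rw [e4]
        push_cast
        ring
      rw [Finset.sum_congr rfl (fun u _ => h1 u), Finset.sum_sub_distrib, Finset.sum_neg_distrib, ihw]
      -- remaining sum: ∑ u ∈ range (w+1), (-1)^u * C(r+(u+1),u+1) * C(b, w-u)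
      have hS : ∑ u ∈ range (w+1), (-1:ℚ)^u * (Nat.choose (r+(u+1)) (u+1)) * (Nat.choose b (w-u))
          = (Nat.choose b (w+1) : ℚ) - (Nat.choose (b-r-1) (w+1) : ℚ) := by
        have hthis := ihr hr (w+1)
        rw [Finset.sum_range_succ'] at hthis
        have h2 : ∀ u : ℕ, (-1:ℚ)^u * (Nat.choose (r+(u+1)) (u+1)) * (Nat.choose b (w-u))
            = -((-1:ℚ)^(u+1) * (Nat.choose (r+(u+1)) (u+1)) * (Nat.choose b (w+1-(u+1)))) := by
          intro u
          have e1 : w+1-(u+1) = w-u := by omega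
          rw [e1]; ring
        rw [Finset.sum_congr rfl (fun u _ => h2 u), Finset.sum_neg_distrib]
        simp only [pow_zero, Nat.add_zero, Nat.choose_zero_right, Nat.cast_one, one_mul,
          Nat.sub_zero, mul_one] at hthis
        linarith [hthis]
      rw [hS]
      have hp : (Nat.choose (b-r-1) (w+1) : ℚ)
          = (Nat.choose (b-r-2) w : ℚ) + (Nat.choose (b-r-2) (w+1) : ℚ) := by
        have e2 : b-r-1 = (b-r-2)+1 := by omega
        rw [e2, Nat.choose_succ_succ']
        push_cast
        ring
      have e3 : b - (r+1) - 1 = b - r - 2 := by omega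
      simp only [e3, pow_zero, Nat.choose_zero_right, Nat.cast_one, one_mul, Nat.sub_self,
        Nat.add_zero, Nat.sub_zero, mul_one]
      rw [hp]
      push_cast
      ring


/-- Inner ℓ-sum when `k + J ≤ n+1` and `J ≤ n`. -/
lemma ds_stepA (n J k : ℕ) (hJ : J ≤ n) (hk : k + J ≤ n+1) :
    ∑ ℓ ∈ range (n+2), (-1:ℚ)^ℓ * (Nat.choose ℓ J) * (Nat.choose (n+1) (k+ℓ))
      = (-1:ℚ)^J * (Nat.choose (n-J) (n+1-J-k)) := by
  set w := n+1-J-k with hw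
  -- split range at J
  rw [range_eq_Ico, ← Finset.sum_Ico_consecutive _ (Nat.zero_le J) (by omega : J ≤ n+2)]
  have hzero : ∑ ℓ ∈ Finset.Ico 0 J, (-1:ℚ)^ℓ * (Nat.choose ℓ J) * (Nat.choose (n+1) (k+ℓ)) = 0 := by
    apply Finset.sum_eq_zero
    intro ℓ hℓ
    simp only [Finset.mem_Ico] at hℓ
    rw [Nat.choose_eq_zero_of_lt hℓ.2]
    simp
  rw [hzero, zero_add, Finset.sum_Ico_eq_sum_range]
  -- now sum over u ∈ range (n+2-J), terms f (J+u)
  have hsub : ∑ u ∈ range (n+2-J), (-1:ℚ)^(J+u) * (Nat.choose (J+u) J) * (Nat.choose (n+1) (k+(J+u)))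
      = ∑ u ∈ range (w+1), (-1:ℚ)^(J+u) * (Nat.choose (J+u) J) * (Nat.choose (n+1) (k+(J+u))) := by
    symm
    apply Finset.sum_subset
    · apply Finset.range_subset_range.2; omega
    · intro u _ hu
      simp only [Finset.mem_range] at hu
      have : n+1 < k+(J+u) := by omega
      rw [Nat.choose_eq_zero_of_lt this]
      ring
  rw [hsub]
  have hterm : ∀ u ∈ range (w+1),
      (-1:ℚ)^(J+u) * (Nat.choose (J+u) J) * (Nat.choose (n+1) (k+(J+u)))
        = (-1:ℚ)^J * ((-1:ℚ)^u * (Nat.choose (J+u) u) * (Nat.choose (n+1) (w-u))) := by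
    intro u hu
    simp only [Finset.mem_range] at hu
    have h1 : Nat.choose (J+u) J = Nat.choose (J+u) u := Nat.choose_symm_add
    have h2 : Nat.choose (n+1) (k+(J+u)) = Nat.choose (n+1) (w-u) := by
      apply Nat.choose_symm_of_eq_add
      omega
    rw [h1, h2, pow_add]
    ring
  rw [Finset.sum_congr rfl hterm, ← Finset.mul_sum, ds_conv (n+1) J (by omega) w]
  have : n+1-J-1 = n-J := by omega
  rw [this]


/-- Vandermonde over ℚ with range sum. -/
lemma ds_vdm (x y k : ℕ) :
    (Nat.choose (x+y) k : ℚ) = ∑ a ∈ range (k+1), (Nat.choose x a : ℚ) * (Nat.choose y (k-a)) := by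
  rw [Nat.add_choose_eq, Finset.Nat.sum_antidiagonal_eq_sum_range_succ_mk]
  push_cast
  rfl

/-- Trinomial revision in the needed form. -/
lemma ds_tri (n t i : ℕ) (hi : i ≤ n+1) :
    Nat.choose (t+1) i * Nat.choose (n+1+t) n
      = Nat.choose (n+1+t) i * Nat.choose (n+1+t-i) n := by
  by_cases h : i ≤ t+1
  · have h1 : Nat.choose (n+1+t) n = Nat.choose (n+1+t) (t+1) :=
      Nat.choose_symm_of_eq_add (by omega)
    have h2 := Nat.choose_mul (n := n+1+t) h
    have h3 : Nat.choose (n+1+t-i) ((t+1)-i) = Nat.choose (n+1+t-i) n :=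
      Nat.choose_symm_of_eq_add (by omega)
    rw [h1, mul_comm, h2, h3]
  · rw [Nat.choose_eq_zero_of_lt (by omega : t+1 < i)]
    rw [Nat.choose_eq_zero_of_lt (by omega : n+1+t-i < n)]
    simp

/-- Subset-splitting swap: `C(x,p) C(x-p,q) = C(x,q) C(x-q,p)` for `p+q ≤ x`. -/
lemma ds_swap (x p q : ℕ) (h : p + q ≤ x) :
    Nat.choose x p * Nat.choose (x-p) q = Nat.choose x q * Nat.choose (x-q) p := by
  have h1 := Nat.choose_mul (n := x) (show p ≤ p+q by omega)
  have h2 := Nat.choose_mul (n := x) (show q ≤ q+p by omega)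
  have e1 : (p+q)-p = q := by omega
  have e2 : (q+p)-q = p := by omega
  rw [e1] at h1
  rw [e2] at h2
  have e3 : Nat.choose (p+q) p = Nat.choose (q+p) q := by
    rw [Nat.choose_symm_add]
    congr 1
    omega
  rw [← h1, ← h2, e3, Nat.add_comm q p]

lemma ds_G2 (n M i : ℕ) (hM : M ≤ n) (hi : i ≤ M+1) :
    ∑ t ∈ range (M+1), (-1:ℚ)^(M+t) * (Nat.choose M t) * (Nat.choose (t+1) i)
        * (Nat.choose (n+1+t) n)
      = (Nat.choose (n+1) (M+1-i) : ℚ) * (Nat.choose (n+i) i) := by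
  have hin : i ≤ n+1 := by omega
  -- step 1+2: rewrite each term via tri and Vandermonde
  have hterm : ∀ t ∈ range (M+1),
      (-1:ℚ)^(M+t) * (Nat.choose M t) * (Nat.choose (t+1) i) * (Nat.choose (n+1+t) n)
        = ∑ a ∈ range (i+1), (-1:ℚ)^(M+t) * (Nat.choose M t) * (Nat.choose t a)
            * (Nat.choose (n+1) (i-a)) * (Nat.choose (n+1+t-i) n) := by
    intro t _
    have h1 : (Nat.choose (t+1) i : ℚ) * (Nat.choose (n+1+t) n)
        = (Nat.choose (n+1+t) i : ℚ) * (Nat.choose (n+1+t-i) n) := by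
      have := ds_tri n t i hin
      exact_mod_cast congrArg (Nat.cast : ℕ → ℚ) this
    have h2 : (Nat.choose (n+1+t) i : ℚ)
        = ∑ a ∈ range (i+1), (Nat.choose t a : ℚ) * (Nat.choose (n+1) (i-a)) := by
      have : n+1+t = t+(n+1) := by omega
      rw [this, ds_vdm]
    calc (-1:ℚ)^(M+t) * (Nat.choose M t) * (Nat.choose (t+1) i) * (Nat.choose (n+1+t) n)
        = (-1:ℚ)^(M+t) * (Nat.choose M t) * ((Nat.choose (t+1) i : ℚ) * (Nat.choose (n+1+t) n)) := by ring
      _ = (-1:ℚ)^(M+t) * (Nat.choose M t) * ((Nat.choose (n+1+t) i : ℚ) * (Nat.choose (n+1+t-i) n)) := by rw [h1]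
      _ = ∑ a ∈ range (i+1), (-1:ℚ)^(M+t) * (Nat.choose M t) * (Nat.choose t a)
            * (Nat.choose (n+1) (i-a)) * (Nat.choose (n+1+t-i) n) := by
          rw [h2, Finset.sum_mul, Finset.mul_sum]
          apply Finset.sum_congr rfl
          intro a _
          ring
  rw [Finset.sum_congr rfl hterm, Finset.sum_comm]
  -- inner t-sum for fixed a
  have hinner : ∀ a ∈ range (i+1),
      ∑ t ∈ range (M+1), (-1:ℚ)^(M+t) * (Nat.choose M t) * (Nat.choose t a)
          * (Nat.choose (n+1) (i-a)) * (Nat.choose (n+1+t-i) n)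
        = (Nat.choose (n+1) (i-a) : ℚ) * (Nat.choose M a) * (Nat.choose (n+1-i+a) (n-M+a)) := by
    intro a ha
    simp only [Finset.mem_range] at ha
    have haa : a ≤ i := by omega
    by_cases haM : a ≤ M
    · -- split at a, reindex
      rw [range_eq_Ico, ← Finset.sum_Ico_consecutive _ (Nat.zero_le a) (by omega : a ≤ M+1)]
      have hz : ∑ t ∈ Finset.Ico 0 a, (-1:ℚ)^(M+t) * (Nat.choose M t) * (Nat.choose t a)
          * (Nat.choose (n+1) (i-a)) * (Nat.choose (n+1+t-i) n) = 0 := by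
        apply Finset.sum_eq_zero
        intro t ht
        simp only [Finset.mem_Ico] at ht
        rw [Nat.choose_eq_zero_of_lt ht.2]
        simp
      rw [hz, zero_add, Finset.sum_Ico_eq_sum_range]
      have e0 : M + 1 - a = (M-a)+1 := by omega
      rw [e0]
      have hterm2 : ∀ u ∈ range ((M-a)+1),
          (-1:ℚ)^(M+(a+u)) * (Nat.choose M (a+u)) * (Nat.choose (a+u) a)
              * (Nat.choose (n+1) (i-a)) * (Nat.choose (n+1+(a+u)-i) n)
            = ((Nat.choose (n+1) (i-a) : ℚ) * (Nat.choose M a) * (-1:ℚ)^(M+a)) *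
              ((-1:ℚ)^u * (Nat.choose (M-a) u) * (Nat.choose ((n+1-i+a)+u) n)) := by
        intro u hu
        simp only [Finset.mem_range] at hu
        have hc : Nat.choose M (a+u) * Nat.choose (a+u) a
            = Nat.choose M a * Nat.choose (M-a) u := by
          have := Nat.choose_mul (n := M) (show a ≤ a+u by omega)
          have e : (a+u)-a = u := by omega
          rw [e] at this
          exact this
        have e2 : n+1+(a+u)-i = (n+1-i+a)+u := by omega
        rw [e2]
        calc (-1:ℚ)^(M+(a+u)) * (Nat.choose M (a+u)) * (Nat.choose (a+u) a)
              * (Nat.choose (n+1) (i-a)) * (Nat.choose ((n+1-i+a)+u) n)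
            = (-1:ℚ)^(M+(a+u)) * ((Nat.choose M (a+u) : ℚ) * (Nat.choose (a+u) a))
              * (Nat.choose (n+1) (i-a)) * (Nat.choose ((n+1-i+a)+u) n) := by ring
          _ = (-1:ℚ)^(M+(a+u)) * ((Nat.choose M a : ℚ) * (Nat.choose (M-a) u))
              * (Nat.choose (n+1) (i-a)) * (Nat.choose ((n+1-i+a)+u) n) := by
              have hcq : ((Nat.choose M (a+u)) : ℚ) * ((Nat.choose (a+u) a) : ℚ)
                  = ((Nat.choose M a) : ℚ) * ((Nat.choose (M-a) u) : ℚ) := by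
                exact_mod_cast hc
              rw [hcq]
          _ = ((Nat.choose (n+1) (i-a) : ℚ) * (Nat.choose M a) * (-1:ℚ)^(M+a)) *
              ((-1:ℚ)^u * (Nat.choose (M-a) u) * (Nat.choose ((n+1-i+a)+u) n)) := by
              rw [show M+(a+u) = (M+a)+u by omega, pow_add]
              ring
      have e5 : n-(M-a) = n-M+a := by omega
      rw [Finset.sum_congr rfl hterm2, ← Finset.mul_sum,
        ds_key n (M-a) (by omega) (n+1-i+a), e5]
      have hsgn : (-1:ℚ)^(M+a) * (-1:ℚ)^(M-a) = 1 := by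
        rw [← pow_add, show M+a+(M-a) = 2*M by omega, pow_mul]
        norm_num
      linear_combination ((Nat.choose (n+1) (i-a) : ℚ) * (Nat.choose M a)
        * (Nat.choose (n+1-i+a) (n-M+a))) * hsgn
    · -- a = M+1
      have haM1 : a = M+1 := by omega
      have hz1 : ∀ t ∈ range (M+1), (-1:ℚ)^(M+t) * (Nat.choose M t) * (Nat.choose t a)
          * (Nat.choose (n+1) (i-a)) * (Nat.choose (n+1+t-i) n) = 0 := by
        intro t ht
        simp only [Finset.mem_range] at ht
        rw [Nat.choose_eq_zero_of_lt (by omega : t < a)]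
        simp
      rw [Finset.sum_eq_zero hz1, Nat.choose_eq_zero_of_lt (by omega : M < a)]
      simp
  rw [Finset.sum_congr rfl hinner]
  -- step 5: per-term rewrite, then Vandermonde
  have hterm3 : ∀ a ∈ range (i+1),
      (Nat.choose (n+1) (i-a) : ℚ) * (Nat.choose M a) * (Nat.choose (n+1-i+a) (n-M+a))
        = ((Nat.choose (n+1) (M+1-i) : ℚ)) * ((Nat.choose M a : ℚ) * (Nat.choose (n-M+i) (i-a))) := by
    intro a ha
    simp only [Finset.mem_range] at ha
    have haa : a ≤ i := by omega
    have h6 : Nat.choose (n+1-i+a) (n-M+a) = Nat.choose (n+1-i+a) (M+1-i) :=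
      Nat.choose_symm_of_eq_add (by omega)
    have h7 : Nat.choose (n+1) (i-a) * Nat.choose ((n+1)-(i-a)) (M+1-i)
        = Nat.choose (n+1) (M+1-i) * Nat.choose ((n+1)-(M+1-i)) (i-a) :=
      ds_swap (n+1) (i-a) (M+1-i) (by omega)
    have e6 : (n+1)-(i-a) = n+1-i+a := by omega
    have e7 : (n+1)-(M+1-i) = n-M+i := by omega
    rw [e6, e7] at h7
    rw [h6]
    have : (Nat.choose (n+1) (i-a) : ℚ) * (Nat.choose (n+1-i+a) (M+1-i))
        = (Nat.choose (n+1) (M+1-i) : ℚ) * (Nat.choose (n-M+i) (i-a)) := by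
      exact_mod_cast congrArg (Nat.cast : ℕ → ℚ) h7
    calc (Nat.choose (n+1) (i-a) : ℚ) * (Nat.choose M a) * (Nat.choose (n+1-i+a) (M+1-i))
        = ((Nat.choose (n+1) (i-a) : ℚ) * (Nat.choose (n+1-i+a) (M+1-i))) * (Nat.choose M a) := by ring
      _ = ((Nat.choose (n+1) (M+1-i) : ℚ) * (Nat.choose (n-M+i) (i-a))) * (Nat.choose M a) := by rw [this]
      _ = ((Nat.choose (n+1) (M+1-i) : ℚ)) * ((Nat.choose M a : ℚ) * (Nat.choose (n-M+i) (i-a))) := by ring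
  rw [Finset.sum_congr rfl hterm3, ← Finset.mul_sum, ← ds_vdm M (n-M+i) i,
    show M+(n-M+i) = n+i by omega]


lemma ds_stepA0 (n J k : ℕ) (hk : n+1 < k + J) :
    ∑ ℓ ∈ range (n+2), (-1:ℚ)^ℓ * (Nat.choose ℓ J) * (Nat.choose (n+1) (k+ℓ)) = 0 := by
  apply Finset.sum_eq_zero
  intro ℓ _
  by_cases h : ℓ < J
  · rw [Nat.choose_eq_zero_of_lt h]; ring
  · rw [Nat.choose_eq_zero_of_lt (show n+1 < k+ℓ by omega)]; ring

lemma ds_main (n i J : ℕ) (hJ : 1 ≤ J) (hiJ : i + J ≤ n+1) :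
    ∑ k ∈ range (n+2), ∑ ℓ ∈ range (n+2),
        (-1:ℚ)^(n+1+k+ℓ) * (Nat.choose k i) * (Nat.choose ℓ J)
          * (Nat.choose (n+1) (k+ℓ)) * (Nat.choose (n+k) n)
      = (Nat.choose (n+1) (i+J) : ℚ) * (Nat.choose (n+i) n) := by
  by_cases hJn : J ≤ n
  swap
  · -- J = n+1, hence i = 0
    have hJ1 : J = n+1 := by omega
    have hi0 : i = 0 := by omega
    subst hJ1; subst hi0
    rw [Finset.sum_eq_single_of_mem 0 (by simp)]
    · rw [Finset.sum_eq_single_of_mem (n+1) (by simp)]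
      · simp only [Nat.choose_zero_right, Nat.choose_self, Nat.add_zero, Nat.zero_add,
          Nat.cast_one, mul_one, one_mul]
        rw [show n+1+0+(n+1) = 2*(n+1) by omega, pow_mul]
        norm_num
      · intro ℓ hℓ hne
        have : ℓ < n+1 := by simp only [Finset.mem_range] at hℓ; omega
        rw [Nat.choose_eq_zero_of_lt this]
        ring
    · intro k hk hne
      apply Finset.sum_eq_zero
      intro ℓ hℓ
      simp only [Finset.mem_range] at hk hℓ
      by_cases h : ℓ < n+1
      · rw [Nat.choose_eq_zero_of_lt h]; ring
      · rw [Nat.choose_eq_zero_of_lt (show n+1 < k+ℓ by omega)]; ring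
  · -- main case J ≤ n
    set M := n - J with hM
    have hQ : n+1-J = M+1 := by omega
    have hiM : i ≤ M+1 := by omega
    -- evaluate inner sums
    have hfact : ∀ k ∈ range (n+2),
        ∑ ℓ ∈ range (n+2), (-1:ℚ)^(n+1+k+ℓ) * (Nat.choose k i) * (Nat.choose ℓ J)
            * (Nat.choose (n+1) (k+ℓ)) * (Nat.choose (n+k) n)
          = ((-1:ℚ)^(n+1+k) * (Nat.choose k i) * (Nat.choose (n+k) n)) *
            (∑ ℓ ∈ range (n+2), (-1:ℚ)^ℓ * (Nat.choose ℓ J) * (Nat.choose (n+1) (k+ℓ))) := by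
      intro k _
      rw [Finset.mul_sum]
      apply Finset.sum_congr rfl
      intro ℓ _
      rw [pow_add]
      ring
    rw [Finset.sum_congr rfl hfact]
    -- shrink outer range: terms with k > M+1 vanish
    have hshrink : ∑ k ∈ range (n+2),
        ((-1:ℚ)^(n+1+k) * (Nat.choose k i) * (Nat.choose (n+k) n)) *
          (∑ ℓ ∈ range (n+2), (-1:ℚ)^ℓ * (Nat.choose ℓ J) * (Nat.choose (n+1) (k+ℓ)))
        = ∑ k ∈ range (M+2),
        ((-1:ℚ)^(n+1+k) * (Nat.choose k i) * (Nat.choose (n+k) n)) *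
          ((-1:ℚ)^J * (Nat.choose M (M+1-k))) := by
      rw [← Finset.sum_subset (Finset.range_subset_range.2 (show M+2 ≤ n+2 by omega))]
      · apply Finset.sum_congr rfl
        intro k hk
        simp only [Finset.mem_range] at hk
        rw [ds_stepA n J k hJn (by omega), show n+1-J-k = M+1-k by omega, ← hM]
      · intro k _ hk
        simp only [Finset.mem_range] at hk
        rw [ds_stepA0 n J k (by omega), mul_zero]
    rw [hshrink]
    -- peel k = 0 (term is 0 since C(M, M+1) = 0)
    rw [Finset.sum_range_succ']
    simp only [Nat.add_zero, Nat.sub_zero, Nat.choose_succ_self, Nat.cast_zero, mul_zero, add_zero]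
    -- match with G2
    have hmatch : ∀ t ∈ range (M+1),
        ((-1:ℚ)^(n+1+(t+1)) * (Nat.choose (t+1) i) * (Nat.choose (n+(t+1)) n)) *
          ((-1:ℚ)^J * (Nat.choose M (M+1-(t+1))))
        = (-1:ℚ)^(M+t) * (Nat.choose M t) * (Nat.choose (t+1) i) * (Nat.choose (n+1+t) n) := by
      intro t ht
      simp only [Finset.mem_range] at ht
      have e1 : M+1-(t+1) = M-t := by omega
      have e2 : Nat.choose M (M-t) = Nat.choose M t := Nat.choose_symm (by omega)
      have e3 : n+(t+1) = n+1+t := by omega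
      rw [e1, e2, e3]
      have hs : (-1:ℚ)^(n+1+(t+1)) * (-1:ℚ)^J = (-1:ℚ)^(M+t) := by
        rw [← pow_add, show n+1+(t+1)+J = (M+t) + 2*(J+1) by omega, pow_add, pow_mul]
        norm_num
      calc ((-1:ℚ)^(n+1+(t+1)) * (Nat.choose (t+1) i) * (Nat.choose (n+1+t) n)) *
          ((-1:ℚ)^J * (Nat.choose M t))
          = ((-1:ℚ)^(n+1+(t+1)) * (-1:ℚ)^J) * (Nat.choose M t) * (Nat.choose (t+1) i)
            * (Nat.choose (n+1+t) n) := by ring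
        _ = (-1:ℚ)^(M+t) * (Nat.choose M t) * (Nat.choose (t+1) i) * (Nat.choose (n+1+t) n) := by
            rw [hs]
    rw [Finset.sum_congr rfl hmatch, ds_G2 n M i (by omega) hiM]
    have e4 : Nat.choose (n+1) (M+1-i) = Nat.choose (n+1) (i+J) :=
      Nat.choose_symm_of_eq_add (by omega)
    have e5 : Nat.choose (n+i) i = Nat.choose (n+i) n := by
      rw [Nat.choose_symm_add, Nat.add_comm]
    rw [e4, e5]


/-- Coefficientwise form of the refined Dehn–Sommerville relations for the explicit
type `A_n` F-triangle coefficients `f_{k,ℓ} = (ℓ+1)/(k+ℓ+1) · C(n,k+ℓ) · C(n+k,n)`. -/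
theorem dehn_sommerville_coefficients_typeA (n i j : ℕ) (hij : i + j ≤ n) :
    ∑ k ∈ range (n + 1), ∑ ℓ ∈ range (n + 1 - k),
        (-1 : ℚ) ^ (n + k + ℓ) * (Nat.choose k i) * (Nat.choose ℓ j) *
          (((ℓ + 1 : ℚ) / (k + ℓ + 1)) * (Nat.choose n (k + ℓ)) * (Nat.choose (n + k) n)) =
      ((j + 1 : ℚ) / (i + j + 1)) * (Nat.choose n (i + j)) * (Nat.choose (n + i) n) := by
  -- per-term rewrite of the left side
  have hterm : ∀ k ℓ : ℕ, (-1:ℚ)^(n+k+ℓ) * (Nat.choose k i) * (Nat.choose ℓ j) *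
        (((ℓ:ℚ)+1)/((k:ℚ)+(ℓ:ℚ)+1) * (Nat.choose n (k+ℓ)) * (Nat.choose (n+k) n))
      = ((j:ℚ)+1)/((n:ℚ)+1) * ((-1:ℚ)^(n+1+k+(ℓ+1)) * (Nat.choose k i)
          * (Nat.choose (ℓ+1) (j+1)) * (Nat.choose (n+1) (k+(ℓ+1))) * (Nat.choose (n+k) n)) := by
    intro k ℓ
    have key1 : ((n:ℚ)+1) * (Nat.choose n (k+ℓ))
        = (Nat.choose (n+1) (k+ℓ+1)) * ((k:ℚ)+(ℓ:ℚ)+1) := by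
      have := Nat.add_one_mul_choose_eq n (k+ℓ)
      have := congrArg (Nat.cast : ℕ → ℚ) this
      push_cast at this
      linarith [this]
    have key2 : ((ℓ:ℚ)+1) * (Nat.choose ℓ j) = (Nat.choose (ℓ+1) (j+1)) * ((j:ℚ)+1) := by
      have := Nat.add_one_mul_choose_eq ℓ j
      have := congrArg (Nat.cast : ℕ → ℚ) this
      push_cast at this
      linarith [this]
    have h1 : ((k:ℚ)+(ℓ:ℚ)+1) ≠ 0 := by positivity
    have h2 : ((n:ℚ)+1) ≠ 0 := by positivity
    have hpow : (-1:ℚ)^(n+1+k+(ℓ+1)) = (-1:ℚ)^(n+k+ℓ) := by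
      rw [show n+1+k+(ℓ+1) = (n+k+ℓ)+2 by omega, pow_add]
      norm_num
    have e1 : ((ℓ:ℚ)+1)/((k:ℚ)+(ℓ:ℚ)+1) * (Nat.choose n (k+ℓ))
        = ((ℓ:ℚ)+1) * (Nat.choose (n+1) (k+ℓ+1)) / ((n:ℚ)+1) := by
      rw [div_mul_eq_mul_div, div_eq_div_iff h1 h2]
      linear_combination ((ℓ:ℚ)+1) * key1
    rw [hpow, show k+(ℓ+1) = k+ℓ+1 by omega, e1]
    linear_combination ((-1:ℚ)^(n+k+ℓ) * (Nat.choose k i) * (Nat.choose (n+k) n)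
      * (Nat.choose (n+1) (k+ℓ+1)) / ((n:ℚ)+1)) * key2
  calc ∑ k ∈ range (n + 1), ∑ ℓ ∈ range (n + 1 - k),
        (-1 : ℚ) ^ (n + k + ℓ) * (Nat.choose k i) * (Nat.choose ℓ j) *
          (((ℓ + 1 : ℚ) / (k + ℓ + 1)) * (Nat.choose n (k + ℓ)) * (Nat.choose (n + k) n))
      = ((j:ℚ)+1)/((n:ℚ)+1) * ∑ k ∈ range (n+1), ∑ ℓ ∈ range (n+1-k),
          ((-1:ℚ)^(n+1+k+(ℓ+1)) * (Nat.choose k i) * (Nat.choose (ℓ+1) (j+1))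
            * (Nat.choose (n+1) (k+(ℓ+1))) * (Nat.choose (n+k) n)) := by
        rw [Finset.mul_sum]
        apply Finset.sum_congr rfl
        intro k _
        rw [Finset.mul_sum]
        apply Finset.sum_congr rfl
        intro ℓ _
        push_cast
        exact hterm k ℓ
    _ = ((j:ℚ)+1)/((n:ℚ)+1) * ∑ k ∈ range (n+2), ∑ ℓ ∈ range (n+2),
          ((-1:ℚ)^(n+1+k+ℓ) * (Nat.choose k i) * (Nat.choose ℓ (j+1))
            * (Nat.choose (n+1) (k+ℓ)) * (Nat.choose (n+k) n)) := by
        congr 1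
        -- first extend the outer sum to range (n+2)
        have hlast : ∑ ℓ ∈ range (n+2), ((-1:ℚ)^(n+1+(n+1)+ℓ) * (Nat.choose (n+1) i)
            * (Nat.choose ℓ (j+1)) * (Nat.choose (n+1) ((n+1)+ℓ)) * (Nat.choose (n+(n+1)) n)) = 0 := by
          apply Finset.sum_eq_zero
          intro ℓ _
          by_cases h : ℓ = 0
          · subst h
            rw [show Nat.choose 0 (j+1) = 0 from Nat.choose_eq_zero_of_lt (by omega)]
            push_cast
            ring
          · rw [Nat.choose_eq_zero_of_lt (show n+1 < (n+1)+ℓ by omega)]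
            push_cast
            ring
        conv_rhs => rw [Finset.sum_range_succ]
        rw [hlast, add_zero]
        apply Finset.sum_congr rfl
        intro k hk
        simp only [Finset.mem_range] at hk
        -- inner: reindex ℓ+1 ↦ ℓ and extend range
        have hre : ∑ ℓ ∈ range (n+2-k), ((-1:ℚ)^(n+1+k+ℓ) * (Nat.choose k i) * (Nat.choose ℓ (j+1))
            * (Nat.choose (n+1) (k+ℓ)) * (Nat.choose (n+k) n))
            = ∑ ℓ ∈ range (n+1-k), ((-1:ℚ)^(n+1+k+(ℓ+1)) * (Nat.choose k i) * (Nat.choose (ℓ+1) (j+1))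
            * (Nat.choose (n+1) (k+(ℓ+1))) * (Nat.choose (n+k) n)) := by
          rw [show n+2-k = (n+1-k)+1 by omega, Finset.sum_range_succ']
          rw [show Nat.choose 0 (j+1) = 0 from Nat.choose_eq_zero_of_lt (by omega)]
          push_cast
          ring_nf
          exact Finset.sum_congr rfl (fun x _ => by ring)
        rw [← hre]
        apply Finset.sum_subset (Finset.range_subset_range.2 (show n+2-k ≤ n+2 by omega))
        intro ℓ _ hℓ
        simp only [Finset.mem_range] at hℓ
        rw [Nat.choose_eq_zero_of_lt (show n+1 < k+ℓ by omega)]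
        push_cast
        ring
    _ = ((j:ℚ)+1)/((n:ℚ)+1) * ((Nat.choose (n+1) (i+j+1) : ℚ) * (Nat.choose (n+i) n)) := by
        have hmn := ds_main n i (j+1) (by omega) (by omega)
        rw [show i+(j+1) = i+j+1 by omega] at hmn
        rw [hmn]
    _ = ((j + 1 : ℚ) / (i + j + 1)) * (Nat.choose n (i + j)) * (Nat.choose (n + i) n) := by
        have key3 : ((n:ℚ)+1) * (Nat.choose n (i+j))
            = (Nat.choose (n+1) (i+j+1)) * ((i:ℚ)+(j:ℚ)+1) := by
          have := Nat.add_one_mul_choose_eq n (i+j)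
          have := congrArg (Nat.cast : ℕ → ℚ) this
          push_cast at this
          linarith [this]
        have h1 : ((i:ℚ)+(j:ℚ)+1) ≠ 0 := by positivity
        have h2 : ((n:ℚ)+1) ≠ 0 := by positivity
        rw [div_mul_eq_mul_div, div_mul_eq_mul_div, div_mul_eq_mul_div,
          div_eq_div_iff h2 h1]
        linear_combination (-((j:ℚ)+1) * (Nat.choose (n+i) n)) * key3
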